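/- Let F be a real n×p matrix and let k ≥ 1 be an even integer with 2.5k ≤ p satisfying δ_{1.5k} + θ_{k,1.5k} < 1. Let β ∈ ℝ^p and y = Fβ + z where the noise z ∈ ℝ^n satisfies ‖Fᵀz‖_∞ ≤ λ for some λ ≥ 0. If β̂ is a minimizer of ‖γ‖₁ over all γ ∈ ℝ^p with ‖Fᵀ(y − Fγ)‖_∞ ≤ λ (the Dantzig selector), then ‖β̂ − β‖₂ ≤ C₁ √k λ + C₂ k^{−1/2} ‖β_{−max(k)}‖₁, where C₁ = 2√3 / (1 − δ_{1.5k} − θ_{k,1.5k}) and C₂ = 2√2(1 − δ_{1.5k}) / (1 − δ_{1.5k} − θ_{k,1.5k}). -/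

import Mathlib

/-- A vector `v ∈ ℝ^p` is `k`-sparse if it has at most `k` nonzero entries. -/
def IsSparse {p : ℕ} (k : ℕ) (v : Fin p → ℝ) : Prop :=
  ∃ s : Finset (Fin p), s.card ≤ k ∧ ∀ i ∉ s, v i = 0

/-- The ℓ₂ norm of a vector in `ℝ^m`. -/
noncomputable def l2norm {m : ℕ} (v : Fin m → ℝ) : ℝ :=
  Real.sqrt (∑ i, v i ^ 2)

/-- The ℓ₁ norm of a vector in `ℝ^m`. -/
def l1norm {m : ℕ} (v : Fin m → ℝ) : ℝ := ∑ i, |v i|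

/-- The `k`-restricted isometry constant `δ_k` of `F`: the smallest `δ` such that
`√(1-δ)‖c‖₂ ≤ ‖Fc‖₂ ≤ √(1+δ)‖c‖₂` for every `k`-sparse vector `c`. -/
noncomputable def ripConst {n p : ℕ} (F : Matrix (Fin n) (Fin p) ℝ) (k : ℕ) : ℝ :=
  sInf {δ : ℝ | ∀ c : Fin p → ℝ, IsSparse k c →
    Real.sqrt (1 - δ) * l2norm c ≤ l2norm (F.mulVec c) ∧
    l2norm (F.mulVec c) ≤ Real.sqrt (1 + δ) * l2norm c}

/-- The `(k,k')`-restricted orthogonality constant `θ_{k,k'}` of `F`: the smallest `θ` such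
that `|⟨Fc, Fc'⟩| ≤ θ‖c‖₂‖c'‖₂` for all `k`-sparse `c` and `k'`-sparse `c'` with disjoint
supports. -/
noncomputable def roConst {n p : ℕ} (F : Matrix (Fin n) (Fin p) ℝ) (k k' : ℕ) : ℝ :=
  sInf {θ : ℝ | ∀ c c' : Fin p → ℝ, IsSparse k c → IsSparse k' c' →
    (∀ i, c i = 0 ∨ c' i = 0) →
    |∑ i, F.mulVec c i * F.mulVec c' i| ≤ θ * (l2norm c * l2norm c')}



lemma l2norm_nonneg {m : ℕ} (v : Fin m → ℝ) : 0 ≤ l2norm v := Real.sqrt_nonneg _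

lemma l2norm_sq {m : ℕ} (v : Fin m → ℝ) : (l2norm v) ^ 2 = ∑ i, v i ^ 2 :=
  Real.sq_sqrt (Finset.sum_nonneg fun i _ => sq_nonneg _)

lemma sqle {a b : ℝ} (ha : 0 ≤ a) (hb : 0 ≤ b) (h : a ^ 2 ≤ b ^ 2) : a ≤ b := by nlinarith

/-- Frobenius bound -/
lemma mulVec_l2_le {n p : ℕ} (F : Matrix (Fin n) (Fin p) ℝ) (c : Fin p → ℝ) :
    (l2norm (F.mulVec c))^2 ≤ (∑ i, ∑ j, F i j ^ 2) * (l2norm c)^2 := by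
  rw [l2norm_sq, l2norm_sq]
  calc ∑ i, F.mulVec c i ^ 2 ≤ ∑ i, (∑ j, F i j ^ 2) * (∑ j, c j ^ 2) := by
        apply Finset.sum_le_sum
        intro i _
        have := Finset.sum_mul_sq_le_sq_mul_sq Finset.univ (fun j => F i j) c
        simpa [Matrix.mulVec, dotProduct] using this
    _ = (∑ i, ∑ j, F i j ^ 2) * (∑ j, c j ^ 2) := by rw [← Finset.sum_mul]

lemma rip_mem_nonempty {n p : ℕ} (F : Matrix (Fin n) (Fin p) ℝ) (k : ℕ) :
    Set.Nonempty {δ : ℝ | ∀ c : Fin p → ℝ, IsSparse k c →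
      Real.sqrt (1 - δ) * l2norm c ≤ l2norm (F.mulVec c) ∧
      l2norm (F.mulVec c) ≤ Real.sqrt (1 + δ) * l2norm c} := by
  set M : ℝ := ∑ i, ∑ j, F i j ^ 2 with hM
  have hM0 : 0 ≤ M := Finset.sum_nonneg fun i _ => Finset.sum_nonneg fun j _ => sq_nonneg _
  refine ⟨M + 1, fun c _ => ⟨?_, ?_⟩⟩
  · have : Real.sqrt (1 - (M+1)) = 0 := by
      apply Real.sqrt_eq_zero'.mpr; linarith
    rw [this, zero_mul]; exact l2norm_nonneg _
  · have h1 : (l2norm (F.mulVec c))^2 ≤ (1 + (M+1)) * (l2norm c)^2 := by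
      have := mulVec_l2_le F c
      nlinarith [sq_nonneg (l2norm c)]
    have h2 : (Real.sqrt (1 + (M+1)) * l2norm c)^2 = (1 + (M+1)) * (l2norm c)^2 := by
      rw [mul_pow, Real.sq_sqrt (by linarith)]
    exact sqle (l2norm_nonneg _) (mul_nonneg (Real.sqrt_nonneg _) (l2norm_nonneg _)) (by rw [h2]; exact h1)

lemma abs_sum_mul_le {q : ℕ} (f g : Fin q → ℝ) :
    |∑ i, f i * g i| ≤ Real.sqrt (∑ i, f i ^2) * Real.sqrt (∑ i, g i ^2) := by
  rw [← Real.sqrt_mul (Finset.sum_nonneg fun i _ => sq_nonneg _)]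
  rw [← Real.sqrt_sq_eq_abs (∑ i, f i * g i)]
  exact Real.sqrt_le_sqrt (by simpa [sq_abs] using Finset.sum_mul_sq_le_sq_mul_sq Finset.univ f g)

lemma ro_mem_nonempty {n p : ℕ} (F : Matrix (Fin n) (Fin p) ℝ) (k k' : ℕ) :
    Set.Nonempty {θ : ℝ | ∀ c c' : Fin p → ℝ, IsSparse k c → IsSparse k' c' →
      (∀ i, c i = 0 ∨ c' i = 0) →
      |∑ i, F.mulVec c i * F.mulVec c' i| ≤ θ * (l2norm c * l2norm c')} := by
  set M : ℝ := ∑ i, ∑ j, F i j ^ 2 with hM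
  have hM0 : 0 ≤ M := Finset.sum_nonneg fun i _ => Finset.sum_nonneg fun j _ => sq_nonneg _
  refine ⟨M, fun c c' _ _ _ => ?_⟩
  have h1 := abs_sum_mul_le (F.mulVec c) (F.mulVec c')
  have h2 : Real.sqrt (∑ i, F.mulVec c i ^2) = l2norm (F.mulVec c) := rfl
  have h3 : Real.sqrt (∑ i, F.mulVec c' i ^2) = l2norm (F.mulVec c') := rfl
  rw [h2, h3] at h1
  have hc : l2norm (F.mulVec c) ≤ Real.sqrt M * l2norm c := by
    apply sqle (l2norm_nonneg _) (mul_nonneg (Real.sqrt_nonneg _) (l2norm_nonneg _))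
    rw [mul_pow, Real.sq_sqrt hM0]; exact mulVec_l2_le F c
  have hc' : l2norm (F.mulVec c') ≤ Real.sqrt M * l2norm c' := by
    apply sqle (l2norm_nonneg _) (mul_nonneg (Real.sqrt_nonneg _) (l2norm_nonneg _))
    rw [mul_pow, Real.sq_sqrt hM0]; exact mulVec_l2_le F c'
  calc |∑ i, F.mulVec c i * F.mulVec c' i| ≤ l2norm (F.mulVec c) * l2norm (F.mulVec c') := h1
    _ ≤ (Real.sqrt M * l2norm c) * (Real.sqrt M * l2norm c') := by
        apply mul_le_mul hc hc' (l2norm_nonneg _) (mul_nonneg (Real.sqrt_nonneg _) (l2norm_nonneg _))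
    _ = (Real.sqrt M * Real.sqrt M) * (l2norm c * l2norm c') := by ring
    _ = M * (l2norm c * l2norm c') := by rw [Real.mul_self_sqrt hM0]

lemma rip_lower {n p : ℕ} (F : Matrix (Fin n) (Fin p) ℝ) (k : ℕ) (c : Fin p → ℝ)
    (hc : IsSparse k c) :
    (1 - ripConst F k) * (l2norm c)^2 ≤ (l2norm (F.mulVec c))^2 := by
  set A := l2norm c with hA
  set R := l2norm (F.mulVec c) with hR
  have hA0 : 0 ≤ A := l2norm_nonneg _
  have hR0 : 0 ≤ R := l2norm_nonneg _
  apply le_of_forall_pos_le_add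
  intro ε hε
  have hε' : 0 < ε / (A^2 + 1) := by positivity
  obtain ⟨δ', hδ'mem, hδ'lt⟩ := Real.lt_sInf_add_pos (rip_mem_nonempty F k) hε'
  have hlow := (hδ'mem c hc).1
  have h1 : (1 - δ') * A^2 ≤ R^2 := by
    have h2 : (Real.sqrt (1 - δ') * A)^2 ≤ R^2 :=
      pow_le_pow_left₀ (mul_nonneg (Real.sqrt_nonneg _) hA0) hlow 2
    have h3 : (1 - δ') * A^2 ≤ (Real.sqrt (1 - δ') * A)^2 := by
      rw [mul_pow]
      rcases le_or_gt 0 (1 - δ') with h | h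
      · rw [Real.sq_sqrt h]
      · nlinarith [sq_nonneg (Real.sqrt (1 - δ') * A), sq_nonneg A]
    linarith
  have hlt : δ' < ripConst F k + ε / (A^2 + 1) := hδ'lt
  have hfrac : (ε / (A^2+1)) * A^2 ≤ ε := by
    rw [div_mul_eq_mul_div, div_le_iff₀ (by positivity)]
    nlinarith [sq_nonneg A]
  nlinarith [sq_nonneg A]

lemma ro_bound {n p : ℕ} (F : Matrix (Fin n) (Fin p) ℝ) (k k' : ℕ)
    (c c' : Fin p → ℝ) (hc : IsSparse k c) (hc' : IsSparse k' c')
    (hd : ∀ i, c i = 0 ∨ c' i = 0) :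
    |∑ i, F.mulVec c i * F.mulVec c' i| ≤ roConst F k k' * (l2norm c * l2norm c') := by
  set N := l2norm c * l2norm c' with hN
  have hN0 : 0 ≤ N := mul_nonneg (l2norm_nonneg _) (l2norm_nonneg _)
  apply le_of_forall_pos_le_add
  intro ε hε
  have hε' : 0 < ε / (N + 1) := by positivity
  obtain ⟨θ', hθ'mem, hθ'lt⟩ := Real.lt_sInf_add_pos (ro_mem_nonempty F k k') hε'
  have h1 := hθ'mem c c' hc hc' hd
  rw [← hN] at h1
  have hlt : θ' < roConst F k k' + ε / (N + 1) := hθ'lt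
  have hfrac : (ε / (N+1)) * N ≤ ε := by
    rw [div_mul_eq_mul_div, div_le_iff₀ (by positivity)]
    nlinarith
  nlinarith

lemma ro_nonneg {n p : ℕ} (F : Matrix (Fin n) (Fin p) ℝ) (k k' : ℕ)
    (hk : 1 ≤ k) (hk' : 1 ≤ k') (hp : 2 ≤ p) : 0 ≤ roConst F k k' := by
  apply le_csInf (ro_mem_nonempty F k k')
  intro θ' hθ'
  by_contra hneg
  push_neg at hneg
  set i0 : Fin p := ⟨0, by omega⟩
  set i1 : Fin p := ⟨1, by omega⟩
  have hne : i0 ≠ i1 := by simp [i0, i1, Fin.ext_iff]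
  set c : Fin p → ℝ := fun i => if i = i0 then 1 else 0 with hc
  set c' : Fin p → ℝ := fun i => if i = i1 then 1 else 0 with hc'
  have hsc : IsSparse k c := ⟨{i0}, by simpa using hk, fun i hi => by
    simp only [Finset.mem_singleton] at hi; simp [hc, hi]⟩
  have hsc' : IsSparse k' c' := ⟨{i1}, by simpa using hk', fun i hi => by
    simp only [Finset.mem_singleton] at hi; simp [hc', hi]⟩
  have hdisj : ∀ i, c i = 0 ∨ c' i = 0 := by
    intro i
    rcases eq_or_ne i i0 with rfl | h
    · right; simpa [hc'] using hne
    · left; simp [hc, h]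
  have := hθ' c c' hsc hsc' hdisj
  have hl2c : l2norm c = 1 := by
    rw [l2norm]
    have : ∑ i, c i ^ 2 = 1 := by
      rw [hc]
      rw [Finset.sum_eq_single i0] <;> simp +contextual
    rw [this, Real.sqrt_one]
  have hl2c' : l2norm c' = 1 := by
    rw [l2norm]
    have : ∑ i, c' i ^ 2 = 1 := by
      rw [hc']
      rw [Finset.sum_eq_single i1] <;> simp +contextual
    rw [this, Real.sqrt_one]
  rw [hl2c, hl2c'] at this
  have h0 : (0:ℝ) ≤ |∑ i, F.mulVec c i * F.mulVec c' i| := abs_nonneg _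
  nlinarith

lemma exists_top {α : Type*} [DecidableEq α] :
    ∀ (k : ℕ) (s : Finset α) (f : α → ℝ), k ≤ s.card →
    ∃ t ⊆ s, t.card = k ∧ ∀ i ∈ t, ∀ j ∈ s, j ∉ t → f j ≤ f i := by
  intro k
  induction k with
  | zero => exact fun s f _ => ⟨∅, Finset.empty_subset _, rfl, by simp⟩
  | succ k ih =>
    intro s f hk
    obtain ⟨t, hts, htc, htp⟩ := ih s f (le_trans (Nat.le_succ k) hk)
    have hne : (s \ t).Nonempty := by
      rw [← Finset.card_pos, Finset.card_sdiff_of_subset hts, htc]; omega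
    obtain ⟨x, hx, hxmax⟩ := Finset.exists_max_image (s \ t) f hne
    have hxs : x ∈ s := (Finset.mem_sdiff.mp hx).1
    have hxt : x ∉ t := (Finset.mem_sdiff.mp hx).2
    refine ⟨insert x t, Finset.insert_subset hxs hts,
      by rw [Finset.card_insert_of_notMem hxt, htc], ?_⟩
    intro i hi j hj hjt
    have hjt' : j ∉ t := fun hh => hjt (Finset.mem_insert_of_mem hh)
    rcases Finset.mem_insert.mp hi with rfl | hit
    · exact hxmax j (Finset.mem_sdiff.mpr ⟨hj, hjt'⟩)
    · exact htp i hit j hj hjt'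


lemma amgm0 {a b : ℝ} (ha : 0 ≤ a) (hb : 0 ≤ b) : Real.sqrt (a*b) ≤ (a+b)/2 := by
  apply sqle (Real.sqrt_nonneg _) (by positivity)
  rw [Real.sq_sqrt (mul_nonneg ha hb)]
  nlinarith [sq_nonneg (a-b)]

/-- ℓ2 norm of a vector supported on `s` with entries bounded by `c`. -/
lemma l2_le_sqrt_c_l1 {p : ℕ} (s : Finset (Fin p)) (u : Fin p → ℝ) (c : ℝ)
    (hsupp : ∀ i ∉ s, u i = 0) (hbnd : ∀ i ∈ s, |u i| ≤ c) :
    l2norm u ≤ Real.sqrt (c * ∑ i ∈ s, |u i|) := by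
  apply Real.sqrt_le_sqrt
  calc ∑ i, u i ^ 2 = ∑ i ∈ s, u i ^ 2 := by
        symm
        apply Finset.sum_subset (Finset.subset_univ s)
        intro i _ hi; rw [hsupp i hi]; ring
    _ ≤ ∑ i ∈ s, c * |u i| := by
        apply Finset.sum_le_sum
        intro i hi
        have h1 : |u i| ≤ c := hbnd i hi
        have h2 : u i ^2 = |u i| ^ 2 := (sq_abs _).symm
        nlinarith [abs_nonneg (u i)]
    _ = c * ∑ i ∈ s, |u i| := by rw [Finset.mul_sum]

/-- Key induction lemma: bound on `⟨Fu, Fw⟩` for non-sparse `u` via block decomposition. -/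
lemma lemA {n p m : ℕ} (F : Matrix (Fin n) (Fin p) ℝ) (hm : 1 ≤ m) (θ : ℝ)
    (hθ : ∀ u w : Fin p → ℝ, IsSparse (2*m) u → IsSparse (3*m) w → (∀ i, u i = 0 ∨ w i = 0) →
      |∑ i, F.mulVec u i * F.mulVec w i| ≤ θ * (l2norm u * l2norm w))
    (hθ0 : 0 ≤ θ) (w : Fin p → ℝ) (hw : IsSparse (3*m) w) :
    ∀ (N : ℕ) (s : Finset (Fin p)) (u : Fin p → ℝ) (c : ℝ), s.card ≤ N →
    (∀ i, i ∉ s → u i = 0) → (∀ i ∈ s, |u i| ≤ c) → 0 ≤ c →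
    (∀ i, u i = 0 ∨ w i = 0) →
    |∑ i, F.mulVec u i * F.mulVec w i| ≤
      θ * l2norm w * (Real.sqrt (2*(m:ℝ)) * c / 2 + (∑ i ∈ s, |u i|) / Real.sqrt (2*(m:ℝ))) := by
  have hs0 : 0 < Real.sqrt (2*(m:ℝ)) := Real.sqrt_pos.mpr (by positivity)
  have hs2 : Real.sqrt (2*(m:ℝ)) ^ 2 = 2*(m:ℝ) := Real.sq_sqrt (by positivity)
  set sq := Real.sqrt (2*(m:ℝ)) with hsq
  -- the small case
  have small : ∀ (s : Finset (Fin p)) (u : Fin p → ℝ) (c : ℝ), s.card ≤ 2*m →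
      (∀ i, i ∉ s → u i = 0) → (∀ i ∈ s, |u i| ≤ c) → 0 ≤ c →
      (∀ i, u i = 0 ∨ w i = 0) →
      |∑ i, F.mulVec u i * F.mulVec w i| ≤
        θ * l2norm w * (sq * c / 2 + (∑ i ∈ s, |u i|) / (2 * sq)) := by
    intro s u c hcard hsupp hbnd hc0 hdisj
    have hX0 : 0 ≤ ∑ i ∈ s, |u i| := Finset.sum_nonneg fun i _ => abs_nonneg _
    set X := ∑ i ∈ s, |u i| with hX
    have h1 := hθ u w ⟨s, hcard, hsupp⟩ hw hdisj
    have h2 : l2norm u ≤ Real.sqrt (c * X) := l2_le_sqrt_c_l1 s u c hsupp hbnd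
    have h3 : Real.sqrt (c * X) ≤ sq * c / 2 + X / (2*sq) := by
      have key : c * X = (sq * c) * (X / sq) := by
        field_simp

      rw [key]
      calc Real.sqrt ((sq * c) * (X / sq)) ≤ ((sq * c) + X / sq)/2 :=
            amgm0 (by positivity) (by positivity)
        _ = sq * c / 2 + X / (2*sq) := by ring
    calc |∑ i, F.mulVec u i * F.mulVec w i| ≤ θ * (l2norm u * l2norm w) := h1
      _ = (θ * l2norm w) * l2norm u := by ring
      _ ≤ (θ * l2norm w) * (sq * c / 2 + X / (2*sq)) := by
          apply mul_le_mul_of_nonneg_left (le_trans h2 h3)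
          exact mul_nonneg hθ0 (l2norm_nonneg _)
      _ = θ * l2norm w * (sq * c / 2 + X / (2*sq)) := by ring
  have half : ∀ (s : Finset (Fin p)) (u : Fin p → ℝ) (c : ℝ),
      θ * l2norm w * (sq * c / 2 + (∑ i ∈ s, |u i|) / (2 * sq)) ≤
      θ * l2norm w * (sq * c / 2 + (∑ i ∈ s, |u i|) / sq) := by
    intro s u c
    have hX0 : 0 ≤ ∑ i ∈ s, |u i| := Finset.sum_nonneg fun i _ => abs_nonneg _
    apply mul_le_mul_of_nonneg_left _ (mul_nonneg hθ0 (l2norm_nonneg _))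
    have := div_le_div_of_nonneg_left hX0 hs0 (by linarith : sq ≤ 2*sq)
    linarith
  intro N
  induction N with
  | zero =>
    intro s u c hcard hsupp hbnd hc0 hdisj
    exact le_trans (small s u c (by omega) hsupp hbnd hc0 hdisj) (half s u c)
  | succ N ih =>
    intro s u c hcard hsupp hbnd hc0 hdisj
    by_cases hsmall : s.card ≤ 2*m
    · exact le_trans (small s u c hsmall hsupp hbnd hc0 hdisj) (half s u c)
    push_neg at hsmall
    obtain ⟨B, hBs, hBcard, hBmax⟩ := exists_top (2*m) s (fun i => |u i|) (by omega)
    have hBne : B.Nonempty := by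
      rw [← Finset.card_pos, hBcard]; omega
    obtain ⟨imin, himinB, hmin⟩ := Finset.exists_min_image B (fun i => |u i|) hBne
    set c' := |u imin| with hc'
    have hc'0 : 0 ≤ c' := abs_nonneg _
    set uB : Fin p → ℝ := fun i => if i ∈ B then u i else 0 with huB
    set uR : Fin p → ℝ := fun i => if i ∈ B then 0 else u i with huR
    have hsplit : ∀ i, F.mulVec u i = F.mulVec uB i + F.mulVec uR i := by
      intro i
      simp only [Matrix.mulVec, dotProduct]
      rw [← Finset.sum_add_distrib]
      apply Finset.sum_congr rfl
      intro j _
      by_cases hj : j ∈ B <;> simp [huB, huR, hj]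
    have hsum : (∑ i, F.mulVec u i * F.mulVec w i) =
        (∑ i, F.mulVec uB i * F.mulVec w i) + (∑ i, F.mulVec uR i * F.mulVec w i) := by
      rw [← Finset.sum_add_distrib]
      apply Finset.sum_congr rfl
      intro i _
      rw [hsplit i]; ring
    -- bound on uB part
    have hBsupp : ∀ i, i ∉ B → uB i = 0 := by intro i hi; simp [huB, hi]
    have hBbnd : ∀ i ∈ B, |uB i| ≤ c := by
      intro i hi; simp only [huB, if_pos hi]; exact hbnd i (hBs hi)
    have hBdisj : ∀ i, uB i = 0 ∨ w i = 0 := by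
      intro i
      by_cases hi : i ∈ B
      · rcases hdisj i with h | h
        · left; simp [huB, h]
        · right; exact h
      · left; simp [huB, hi]
    have hB1 := hθ uB w ⟨B, le_of_eq hBcard, hBsupp⟩ hw hBdisj
    have hXB0 : 0 ≤ ∑ i ∈ B, |u i| := Finset.sum_nonneg fun i _ => abs_nonneg _
    set XB := ∑ i ∈ B, |u i| with hXB
    have hBl2 : l2norm uB ≤ Real.sqrt (c * XB) := by
      have := l2_le_sqrt_c_l1 B uB c hBsupp hBbnd
      have hXeq : ∑ i ∈ B, |uB i| = XB := by
        apply Finset.sum_congr rfl; intro i hi; simp [huB, if_pos hi]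
      rwa [hXeq] at this
    have hB3 : Real.sqrt (c * XB) ≤ sq * c / 2 + XB / (2*sq) := by
      have key : c * XB = (sq * c) * (XB / sq) := by field_simp
      rw [key]
      calc Real.sqrt ((sq * c) * (XB / sq)) ≤ ((sq * c) + XB / sq)/2 :=
            amgm0 (by positivity) (by positivity)
        _ = sq * c / 2 + XB / (2*sq) := by ring
    have hBbound : |∑ i, F.mulVec uB i * F.mulVec w i| ≤
        θ * l2norm w * (sq * c / 2 + XB / (2*sq)) := by
      calc |∑ i, F.mulVec uB i * F.mulVec w i| ≤ θ * (l2norm uB * l2norm w) := hB1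
        _ = (θ * l2norm w) * l2norm uB := by ring
        _ ≤ (θ * l2norm w) * (sq * c / 2 + XB / (2*sq)) :=
            mul_le_mul_of_nonneg_left (le_trans hBl2 hB3)
              (mul_nonneg hθ0 (l2norm_nonneg _))
        _ = _ := by ring
    -- bound on uR part via induction
    have hRsupp : ∀ i, i ∉ s \ B → uR i = 0 := by
      intro i hi
      rw [Finset.mem_sdiff] at hi
      push_neg at hi
      by_cases hiB : i ∈ B
      · simp [huR, hiB]
      · simp only [huR, if_neg hiB]
        by_cases his : i ∈ s
        · exact absurd (hi his) (by simp [hiB])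
        · exact hsupp i his
    have hRbnd : ∀ i ∈ s \ B, |uR i| ≤ c' := by
      intro i hi
      rw [Finset.mem_sdiff] at hi
      simp only [huR, if_neg hi.2]
      exact hBmax imin himinB i hi.1 hi.2
    have hRdisj : ∀ i, uR i = 0 ∨ w i = 0 := by
      intro i
      by_cases hi : i ∈ B
      · left; simp [huR, hi]
      · rcases hdisj i with h | h
        · left; simp [huR, hi, h]
        · right; exact h
    have hRcard : (s \ B).card ≤ N := by
      rw [Finset.card_sdiff_of_subset hBs, hBcard]; omega
    have hRbound := ih (s \ B) uR c' hRcard hRsupp hRbnd hc'0 hRdisj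
    have hXReq : ∑ i ∈ s \ B, |uR i| = ∑ i ∈ s \ B, |u i| := by
      apply Finset.sum_congr rfl
      intro i hi
      rw [Finset.mem_sdiff] at hi
      simp [huR, if_neg hi.2]
    rw [hXReq] at hRbound
    set XR := ∑ i ∈ s \ B, |u i| with hXR
    have hXR0 : 0 ≤ XR := Finset.sum_nonneg fun i _ => abs_nonneg _
    -- min bound: 2m * c' ≤ XB
    have hminXB : (2*(m:ℝ)) * c' ≤ XB := by
      have := Finset.card_nsmul_le_sum B (fun i => |u i|) c' (fun x hx => hmin x hx)
      rw [hBcard] at this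
      have h2 : ((2*m : ℕ) : ℝ) * c' ≤ XB := by
        rw [← nsmul_eq_mul]; exact_mod_cast this
      push_cast at h2
      linarith
    have hc'bound : sq * c' / 2 ≤ XB / (2*sq) := by
      rw [div_le_div_iff₀ (by norm_num) (by positivity)]
      nlinarith [hminXB, hs2, hs0, hc'0]
    -- combine
    have hsum_split : XB + XR = ∑ i ∈ s, |u i| := by
      rw [hXB, hXR, add_comm]
      exact Finset.sum_sdiff hBs
    calc |∑ i, F.mulVec u i * F.mulVec w i|
        ≤ |∑ i, F.mulVec uB i * F.mulVec w i| + |∑ i, F.mulVec uR i * F.mulVec w i| := by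
          rw [hsum]; exact abs_add_le _ _
      _ ≤ θ * l2norm w * (sq * c / 2 + XB / (2*sq)) +
          θ * l2norm w * (sq * c' / 2 + XR / sq) := add_le_add hBbound hRbound
      _ ≤ θ * l2norm w * (sq * c / 2 + XB / (2*sq)) +
          θ * l2norm w * (XB / (2*sq) + XR / sq) := by
          apply add_le_add_right
          exact mul_le_mul_of_nonneg_left (by linarith)
            (mul_nonneg hθ0 (l2norm_nonneg _))
      _ = θ * l2norm w * (sq * c / 2 + (XB + XR) / sq) := by
          field_simp
          ring
      _ = θ * l2norm w * (sq * c / 2 + (∑ i ∈ s, |u i|) / sq) := by rw [hsum_split]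

lemma l1_le_sqrt_card {p : ℕ} (U : Finset (Fin p)) (v : Fin p → ℝ) :
    ∑ i ∈ U, |v i| ≤ Real.sqrt (U.card) * Real.sqrt (∑ i ∈ U, v i ^ 2) := by
  have h1 : 0 ≤ ∑ i ∈ U, v i ^ 2 := Finset.sum_nonneg fun i _ => sq_nonneg _
  apply sqle (Finset.sum_nonneg fun i _ => abs_nonneg _) (by positivity)
  rw [mul_pow, Real.sq_sqrt (by positivity), Real.sq_sqrt h1]
  have := Finset.sum_mul_sq_le_sq_mul_sq U (fun _ => (1:ℝ)) (fun i => |v i|)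
  simpa [sq_abs] using this


set_option maxHeartbeats 1000000 in
/-- Dantzig selector with bounded-correlation noise, general `β`.
With `k = 2*m` even, `δ_{1.5k} + θ_{k,1.5k} < 1`, `y = Fβ + z`, `‖Fᵀz‖_∞ ≤ λ`, if `β̂`
minimizes the ℓ₁ norm subject to `‖Fᵀ(y - Fγ)‖_∞ ≤ λ`, then
`‖β̂ - β‖₂ ≤ C₁ √k λ + C₂ k^{-1/2} ‖β_{-max(k)}‖₁`. -/
theorem dantzig_selector_error {n p m : ℕ} (F : Matrix (Fin n) (Fin p) ℝ)
    (hm : 1 ≤ m) (hp : 5 * m ≤ p)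
    (hcond : ripConst F (3 * m) + roConst F (2 * m) (3 * m) < 1)
    (β : Fin p → ℝ) (z : Fin n → ℝ) (y : Fin n → ℝ) (hy : y = fun i => F.mulVec β i + z i)
    (lam : ℝ) (hlam : 0 ≤ lam)
    (hz : ∀ j, |(Matrix.transpose F).mulVec z j| ≤ lam)
    (βhat : Fin p → ℝ)
    (hfeas : ∀ j, |(Matrix.transpose F).mulVec (fun i => y i - F.mulVec βhat i) j| ≤ lam)
    (hmin : ∀ γ : Fin p → ℝ,
      (∀ j, |(Matrix.transpose F).mulVec (fun i => y i - F.mulVec γ i) j| ≤ lam) →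
      l1norm βhat ≤ l1norm γ)
    (T : Finset (Fin p)) (hT : T.card = 2 * m)
    (hTmax : ∀ i ∈ T, ∀ j ∉ T, |β j| ≤ |β i|) :
    l2norm (fun i => βhat i - β i) ≤
      (2 * Real.sqrt 3 / (1 - ripConst F (3 * m) - roConst F (2 * m) (3 * m))) *
        Real.sqrt (2 * m) * lam +
      (2 * Real.sqrt 2 * (1 - ripConst F (3 * m)) /
        (1 - ripConst F (3 * m) - roConst F (2 * m) (3 * m))) *
        ((Real.sqrt (2 * m))⁻¹ * ∑ j ∈ Tᶜ, |β j|) := by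
  classical
  set δ := ripConst F (3 * m) with hδdef
  set θ := roConst F (2 * m) (3 * m) with hθdef
  have hθ0 : 0 ≤ θ := ro_nonneg F (2*m) (3*m) (by omega) (by omega) (by omega)
  have hD : 0 < 1 - δ - θ := by linarith
  set D := 1 - δ - θ with hDdef
  set b := ∑ j ∈ Tᶜ, |β j| with hb
  have hb0 : 0 ≤ b := Finset.sum_nonneg fun i _ => abs_nonneg _
  set h : Fin p → ℝ := fun i => βhat i - β i with hh
  have hm1 : (1:ℝ) ≤ m := by exact_mod_cast hm
  have hs0 : 0 < Real.sqrt (2*(m:ℝ)) := Real.sqrt_pos.mpr (by positivity)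
  have hs2 : Real.sqrt (2*(m:ℝ)) ^ 2 = 2*(m:ℝ) := Real.sq_sqrt (by positivity)
  set sq := Real.sqrt (2*(m:ℝ)) with hsqdef
  -- T₁ : the m largest |h|-entries of Tᶜ
  have hTc : 3*m ≤ Tᶜ.card := by
    rw [Finset.card_compl, hT, Fintype.card_fin]; omega
  obtain ⟨T₁, hT₁sub, hT₁card, hT₁max⟩ := exists_top m Tᶜ (fun i => |h i|) (by omega)
  have hT₁ne : T₁.Nonempty := by rw [← Finset.card_pos, hT₁card]; omega
  obtain ⟨imin, himin, hminT₁⟩ := Finset.exists_min_image T₁ (fun i => |h i|) hT₁ne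
  set cm := |h imin| with hcm
  set U := T ∪ T₁ with hU
  set h₁ : Fin p → ℝ := fun i => if i ∈ U then h i else 0 with hh₁
  set h₂ : Fin p → ℝ := fun i => if i ∈ U then 0 else h i with hh₂
  have hUcard : U.card ≤ 3*m := by
    refine le_trans (Finset.card_union_le T T₁) ?_
    rw [hT, hT₁card]; omega
  have h₁sparse : IsSparse (3*m) h₁ := ⟨U, hUcard, fun i hi => by simp [hh₁, hi]⟩
  set A := l2norm h₁ with hA
  have hA0 : 0 ≤ A := l2norm_nonneg _
  -- feasibility of β
  have hyz : (fun i => y i - F.mulVec β i) = z := by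
    funext i; rw [hy]; ring
  have hl1 : l1norm βhat ≤ l1norm β := hmin β (by rw [hyz]; exact hz)
  -- correlation bound
  have hg : ∀ j, |(Matrix.transpose F).mulVec (F.mulVec h) j| ≤ 2*lam := by
    intro j
    have key : (Matrix.transpose F).mulVec (F.mulVec h) j =
        (Matrix.transpose F).mulVec (fun i => y i - F.mulVec β i) j
        - (Matrix.transpose F).mulVec (fun i => y i - F.mulVec βhat i) j := by
      simp only [Matrix.mulVec, dotProduct, Matrix.transpose_apply]
      rw [← Finset.sum_sub_distrib]
      apply Finset.sum_congr rfl
      intro i _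
      have hsub : ∑ k, F i k * h k = (∑ k, F i k * βhat k) - (∑ k, F i k * β k) := by
        rw [← Finset.sum_sub_distrib]
        apply Finset.sum_congr rfl
        intro k _
        simp only [hh]; ring
      rw [hsub]; ring
    rw [key, sub_eq_add_neg]
    refine le_trans (abs_add_le _ _) ?_
    rw [abs_neg, hyz]
    have h1 := hz j
    have h2 := hfeas j
    linarith
  -- inner product identity
  have hinner : ∀ v : Fin p → ℝ, (∑ i, F.mulVec h i * F.mulVec v i) =
      ∑ j, (Matrix.transpose F).mulVec (F.mulVec h) j * v j := by
    intro v
    simp only [Matrix.mulVec, dotProduct, Matrix.transpose_apply]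
    calc ∑ i, (∑ k, F i k * h k) * (∑ j, F i j * v j)
        = ∑ i, ∑ j, (∑ k, F i k * h k) * (F i j * v j) := by
          apply Finset.sum_congr rfl; intro i _; rw [Finset.mul_sum]
      _ = ∑ j, ∑ i, (∑ k, F i k * h k) * (F i j * v j) := Finset.sum_comm
      _ = ∑ j, (∑ i, F i j * (∑ k, F i k * h k)) * v j := by
          apply Finset.sum_congr rfl; intro j _
          rw [Finset.sum_mul]
          apply Finset.sum_congr rfl; intro i _; ring
  -- A² = ∑_U h²
  have hA2 : A^2 = ∑ i ∈ U, h i ^ 2 := by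
    rw [hA, l2norm_sq]
    rw [← Finset.sum_subset (Finset.subset_univ U)
      (fun i _ hi => by simp [hh₁, hi])]
    apply Finset.sum_congr rfl
    intro i hi; simp [hh₁, hi]
  have hArt : Real.sqrt (∑ i ∈ U, h i ^ 2) = A := by
    rw [← hA2, Real.sqrt_sq hA0]
  -- ℓ1 of h₁ bound
  have hl1h₁ : ∑ j, |h₁ j| ≤ Real.sqrt (3*(m:ℝ)) * A := by
    have e1 : ∑ j, |h₁ j| = ∑ j ∈ U, |h j| := by
      rw [← Finset.sum_subset (Finset.subset_univ U)
        (fun i _ hi => by simp [hh₁, hi])]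
      apply Finset.sum_congr rfl
      intro i hi; simp [hh₁, hi]
    rw [e1]
    refine le_trans (l1_le_sqrt_card U h) ?_
    rw [hArt]
    apply mul_le_mul_of_nonneg_right _ hA0
    apply Real.sqrt_le_sqrt
    exact_mod_cast hUcard
  -- |⟨Fh, Fh₁⟩| ≤ 2λ√(3m)A
  have hip1 : |∑ i, F.mulVec h i * F.mulVec h₁ i| ≤ 2*lam * (Real.sqrt (3*(m:ℝ)) * A) := by
    rw [hinner h₁]
    calc |∑ j, (Matrix.transpose F).mulVec (F.mulVec h) j * h₁ j|
        ≤ ∑ j, |(Matrix.transpose F).mulVec (F.mulVec h) j * h₁ j| :=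
          Finset.abs_sum_le_sum_abs _ _
      _ ≤ ∑ j, 2*lam * |h₁ j| := by
          apply Finset.sum_le_sum
          intro j _
          rw [abs_mul]
          exact mul_le_mul_of_nonneg_right (hg j) (abs_nonneg _)
      _ = 2*lam * ∑ j, |h₁ j| := by rw [Finset.mul_sum]
      _ ≤ 2*lam * (Real.sqrt (3*(m:ℝ)) * A) :=
          mul_le_mul_of_nonneg_left hl1h₁ (by linarith)
  -- RIP lower bound
  have hrip : (1-δ) * A^2 ≤ ∑ i, F.mulVec h₁ i ^ 2 := by
    have := rip_lower F (3*m) h₁ h₁sparse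
    rw [l2norm_sq (F.mulVec h₁), ← hA, ← hδdef] at this
    exact this
  -- decomposition
  have hdec : (∑ i, F.mulVec h i * F.mulVec h₁ i) =
      (∑ i, F.mulVec h₁ i ^ 2) + (∑ i, F.mulVec h₂ i * F.mulVec h₁ i) := by
    rw [← Finset.sum_add_distrib]
    apply Finset.sum_congr rfl
    intro i _
    have hsplit : F.mulVec h i = F.mulVec h₁ i + F.mulVec h₂ i := by
      simp only [Matrix.mulVec, dotProduct]
      rw [← Finset.sum_add_distrib]
      apply Finset.sum_congr rfl
      intro j _
      by_cases hj : j ∈ U <;> simp [hh₁, hh₂, hj]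
    rw [hsplit]; ring
  -- lemA application
  set s2 := Tᶜ \ T₁ with hs2def
  have hs2supp : ∀ i, i ∉ s2 → h₂ i = 0 := by
    intro i hi
    by_cases hiU : i ∈ U
    · simp [hh₂, hiU]
    · exfalso
      apply hi
      rw [Finset.mem_sdiff]
      rw [hU, Finset.mem_union] at hiU
      push_neg at hiU
      exact ⟨Finset.mem_compl.mpr hiU.1, hiU.2⟩
  have hs2eq : ∀ i ∈ s2, h₂ i = h i := by
    intro i hi
    rw [Finset.mem_sdiff] at hi
    have : i ∉ U := by
      rw [hU, Finset.mem_union]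
      push_neg
      exact ⟨Finset.mem_compl.mp hi.1, hi.2⟩
    simp [hh₂, this]
  have hs2bnd : ∀ i ∈ s2, |h₂ i| ≤ cm := by
    intro i hi
    rw [hs2eq i hi]
    rw [Finset.mem_sdiff] at hi
    exact hT₁max imin himin i hi.1 hi.2
  have hs2disj : ∀ i, h₂ i = 0 ∨ h₁ i = 0 := by
    intro i
    by_cases hiU : i ∈ U
    · left; simp [hh₂, hiU]
    · right; simp [hh₁, hiU]
  have hip2 := lemA F hm θ
    (fun u w hu hw hd => ro_bound F (2*m) (3*m) u w hu hw hd) hθ0 h₁ h₁sparse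
    p s2 h₂ cm (le_trans (Finset.card_le_univ _) (by simp)) hs2supp hs2bnd (abs_nonneg _)
    hs2disj
  -- refine hip2
  set S₁ := ∑ i ∈ T₁, |h i| with hS₁
  set S₂ := ∑ i ∈ s2, |h i| with hS₂
  have hS₁0 : 0 ≤ S₁ := Finset.sum_nonneg fun i _ => abs_nonneg _
  have hS₂0 : 0 ≤ S₂ := Finset.sum_nonneg fun i _ => abs_nonneg _
  have hs2h : ∑ i ∈ s2, |h₂ i| = S₂ := by
    apply Finset.sum_congr rfl
    intro i hi; rw [hs2eq i hi]
  rw [hs2h] at hip2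
  have hmcm : (m:ℝ) * cm ≤ S₁ := by
    have := Finset.card_nsmul_le_sum T₁ (fun i => |h i|) cm (fun x hx => hminT₁ x hx)
    rw [hT₁card, nsmul_eq_mul] at this
    exact_mod_cast this
  have hcm0 : 0 ≤ cm := abs_nonneg _
  have hXsum : S₂ + S₁ = ∑ i ∈ Tᶜ, |h i| := Finset.sum_sdiff hT₁sub
  set X := ∑ i ∈ Tᶜ, |h i| with hX
  have hX0 : 0 ≤ X := Finset.sum_nonneg fun i _ => abs_nonneg _
  have hip2' : |∑ i, F.mulVec h₂ i * F.mulVec h₁ i| ≤ θ * A * (X / sq) := by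
    refine le_trans hip2 ?_
    have hbound : sq * cm / 2 + S₂ / sq ≤ X / sq := by
      have h1 : sq * cm / 2 ≤ S₁ / sq := by
        rw [div_le_div_iff₀ (by norm_num) hs0]
        calc sq * cm * sq = sq^2 * cm := by ring
          _ = 2*(m:ℝ)*cm := by rw [hs2]
          _ ≤ 2*S₁ := by linarith [hmcm]
          _ = S₁ * 2 := by ring
      have h2 : S₁ / sq + S₂ / sq = X / sq := by
        rw [← add_div, add_comm, hXsum]
      linarith
    calc θ * l2norm h₁ * (sq * cm / 2 + S₂ / sq) = θ * A * (sq * cm / 2 + S₂ / sq) := by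
          rw [← hA]
      _ ≤ θ * A * (X / sq) :=
          mul_le_mul_of_nonneg_left hbound (mul_nonneg hθ0 hA0)
  -- cone condition
  have hcone : X ≤ (∑ i ∈ T, |h i|) + 2*b := by
    have e2 : ∑ i ∈ Tᶜ, |h i| ≤ (∑ i ∈ Tᶜ, |βhat i|) + ∑ i ∈ Tᶜ, |β i| := by
      rw [← Finset.sum_add_distrib]
      apply Finset.sum_le_sum
      intro i _
      simp only [hh]
      exact abs_sub (βhat i) (β i)
    have e1 : (∑ i ∈ T, |β i|) - (∑ i ∈ T, |βhat i|) ≤ ∑ i ∈ T, |h i| := by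
      rw [← Finset.sum_sub_distrib]
      apply Finset.sum_le_sum
      intro i _
      simp only [hh]
      calc |β i| - |βhat i| ≤ |β i - βhat i| := abs_sub_abs_le_abs_sub _ _
        _ = |βhat i - β i| := abs_sub_comm _ _
    have e3 : (∑ i ∈ T, |βhat i|) + (∑ i ∈ Tᶜ, |βhat i|) = l1norm βhat :=
      Finset.sum_add_sum_compl T _
    have e4 : (∑ i ∈ T, |β i|) + (∑ i ∈ Tᶜ, |β i|) = l1norm β :=
      Finset.sum_add_sum_compl T _
    rw [hX, hb]
    linarith
  -- ∑_T |h| ≤ sq * A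
  have hTl1 : ∑ i ∈ T, |h i| ≤ sq * A := by
    refine le_trans (l1_le_sqrt_card T h) ?_
    have hc1 : Real.sqrt (T.card : ℝ) = sq := by
      rw [hT, hsqdef]; push_cast; ring_nf
    have hc2 : Real.sqrt (∑ i ∈ T, h i ^ 2) ≤ A := by
      rw [← hArt]
      apply Real.sqrt_le_sqrt
      apply Finset.sum_le_sum_of_subset_of_nonneg Finset.subset_union_left
      intro i _ _; exact sq_nonneg _
    rw [hc1]
    exact mul_le_mul_of_nonneg_left hc2 (le_of_lt hs0)
  -- main inequality for A
  have hmain : D * A^2 ≤ 2*Real.sqrt (3*(m:ℝ))*lam*A + 2*θ*(b/sq)*A := by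
    have c1 : (1-δ)*A^2 ≤ 2*lam*(Real.sqrt (3*(m:ℝ))*A) + θ*A*(X/sq) := by
      have c2 : (∑ i, F.mulVec h₁ i ^ 2) ≤
          |∑ i, F.mulVec h i * F.mulVec h₁ i| + |∑ i, F.mulVec h₂ i * F.mulVec h₁ i| := by
        have := abs_sub_abs_le_abs_sub (∑ i, F.mulVec h i * F.mulVec h₁ i)
          (∑ i, F.mulVec h₂ i * F.mulVec h₁ i)
        have heq : (∑ i, F.mulVec h i * F.mulVec h₁ i) -
            (∑ i, F.mulVec h₂ i * F.mulVec h₁ i) = ∑ i, F.mulVec h₁ i ^ 2 := by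
          rw [hdec]; ring
        calc (∑ i, F.mulVec h₁ i ^ 2)
            = |∑ i, F.mulVec h₁ i ^ 2| :=
              (abs_of_nonneg (Finset.sum_nonneg fun i _ => sq_nonneg _)).symm
          _ = |(∑ i, F.mulVec h i * F.mulVec h₁ i) -
              (∑ i, F.mulVec h₂ i * F.mulVec h₁ i)| := by rw [heq]
          _ ≤ _ := abs_sub _ _
      linarith [hrip, hip1, hip2']
    have c3 : θ*A*(X/sq) ≤ θ*A^2 + 2*θ*(b/sq)*A := by
      have c4 : X/sq ≤ A + 2*(b/sq) := by
        rw [div_le_iff₀ hs0]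
        calc X ≤ (∑ i ∈ T, |h i|) + 2*b := hcone
          _ ≤ sq*A + 2*b := by linarith [hTl1]
          _ = (A + 2*(b/sq))*sq := by field_simp
      calc θ*A*(X/sq) ≤ θ*A*(A + 2*(b/sq)) :=
            mul_le_mul_of_nonneg_left c4 (mul_nonneg hθ0 hA0)
        _ = θ*A^2 + 2*θ*(b/sq)*A := by ring
    rw [hDdef]
    linarith [c1, c3]
  set E := (2*Real.sqrt (3*(m:ℝ))*lam + 2*θ*(b/sq))/D with hE
  clear_value δ θ D b h sq cm U h₁ h₂ A X S₁ S₂ s2 E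
  have hE0 : 0 ≤ E := by
    rw [hE]
    apply div_nonneg _ (le_of_lt hD)
    have : 0 ≤ b / sq := div_nonneg hb0 (le_of_lt hs0)
    positivity
  have hAE : A ≤ E := by
    rcases eq_or_lt_of_le hA0 with h0 | hApos
    · rw [← h0]; exact hE0
    · have key : D*A ≤ 2*Real.sqrt (3*(m:ℝ))*lam + 2*θ*(b/sq) := by
        by_contra hcon
        push_neg at hcon
        have h2 := mul_lt_mul_of_pos_right hcon hApos
        linarith [hmain, h2]
      rw [hE, le_div_iff₀ hD]
      linarith [key]
  -- tail bound
  have hY2 : (l2norm h₂)^2 ≤ (X/sq)^2 := by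
    have t1 : (l2norm h₂)^2 = ∑ i ∈ s2, h i ^ 2 := by
      rw [l2norm_sq]
      rw [← Finset.sum_subset (Finset.subset_univ s2)
        (fun i _ hi => by rw [hs2supp i hi]; ring)]
      apply Finset.sum_congr rfl
      intro i hi; rw [hs2eq i hi]
    have t2 : ∑ i ∈ s2, h i ^ 2 ≤ cm * S₂ := by
      rw [hS₂, Finset.mul_sum]
      apply Finset.sum_le_sum
      intro i hi
      have hb1 : |h i| ≤ cm := by
        have := hs2bnd i hi
        rwa [hs2eq i hi] at this
      calc h i ^2 = |h i| * |h i| := by rw [← sq_abs]; ring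
        _ ≤ cm * |h i| := mul_le_mul_of_nonneg_right hb1 (abs_nonneg _)
    have t3 : (X/sq)^2 = X^2/(2*(m:ℝ)) := by
      rw [div_pow, hs2]
    rw [t1, t3]
    rw [le_div_iff₀ (by positivity)]
    have hXe : X = S₂ + S₁ := hXsum.symm
    have u1 : (∑ i ∈ s2, h i ^ 2)*(2*(m:ℝ)) ≤ (cm*S₂)*(2*(m:ℝ)) :=
      mul_le_mul_of_nonneg_right t2 (by positivity)
    have u2 : (cm*S₂)*(2*(m:ℝ)) = 2*S₂*((m:ℝ)*cm) := by ring
    have u3 : 2*S₂*((m:ℝ)*cm) ≤ 2*S₂*S₁ :=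
      mul_le_mul_of_nonneg_left hmcm (by linarith [hS₂0])
    have u4 : 2*S₂*S₁ ≤ (S₂+S₁)^2 := by
      have q1 := sq_nonneg S₁
      have q2 := sq_nonneg S₂
      linarith [q1, q2]
    rw [hXe]
    linarith [u1, u2, u3, u4]
  -- final combination
  have hYX : l2norm h₂ ≤ X / sq := by
    apply sqle (l2norm_nonneg _) (div_nonneg hX0 (le_of_lt hs0))
    exact hY2
  have hbq0 : 0 ≤ b / sq := div_nonneg hb0 (le_of_lt hs0)
  have hXA : X / sq ≤ A + 2*(b/sq) := by
    rw [div_le_iff₀ hs0]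
    calc X ≤ (∑ i ∈ T, |h i|) + 2*b := hcone
      _ ≤ sq*A + 2*b := by linarith [hTl1]
      _ = (A + 2*(b/sq))*sq := by field_simp
  have hfin2 : (l2norm h)^2 = A^2 + (l2norm h₂)^2 := by
    have e1a : ∑ i, h₂ i ^2 = ∑ i ∈ Uᶜ, h₂ i ^2 := by
      symm
      apply Finset.sum_subset (Finset.subset_univ Uᶜ)
      intro i _ hi
      rw [Finset.mem_compl, not_not] at hi
      rw [hh₂]; simp [hi]
    have e1b : ∑ i ∈ Uᶜ, h₂ i ^2 = ∑ i ∈ Uᶜ, h i ^2 := by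
      apply Finset.sum_congr rfl
      intro i hi
      rw [Finset.mem_compl] at hi
      rw [hh₂]; simp [hi]
    have e2 := Finset.sum_add_sum_compl U (fun i => h i ^ 2)
    rw [l2norm_sq, l2norm_sq, hA2]
    linarith [e1a, e1b, e2]
  have hZ0 : 0 ≤ A + 2*(b/sq) := by linarith [hA0, hbq0]
  have hfinal : l2norm h ≤ Real.sqrt 2 * (A + 2*(b/sq)) := by
    apply sqle (l2norm_nonneg _) (mul_nonneg (Real.sqrt_nonneg _) hZ0)
    rw [mul_pow, Real.sq_sqrt (by norm_num : (0:ℝ) ≤ 2), hfin2]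
    have w1 : l2norm h₂ ≤ A + 2*(b/sq) := le_trans hYX hXA
    have w2 : (l2norm h₂)^2 ≤ (A + 2*(b/sq))^2 :=
      pow_le_pow_left₀ (l2norm_nonneg _) w1 2
    have w3 : A^2 ≤ (A + 2*(b/sq))^2 := pow_le_pow_left₀ hA0 (by linarith [hbq0]) 2
    linarith [w2, w3]
  have h2pos : (0:ℝ) < Real.sqrt 2 := Real.sqrt_pos.mpr (by norm_num)
  have h23 : Real.sqrt 2 * Real.sqrt (3*(m:ℝ)) = Real.sqrt 3 * sq := by
    rw [hsqdef, ← Real.sqrt_mul (by norm_num : (0:ℝ) ≤ 2),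
      ← Real.sqrt_mul (by norm_num : (0:ℝ) ≤ 3)]
    congr 1
    ring
  have h24 : Real.sqrt (3*(m:ℝ)) = Real.sqrt 3 * sq / Real.sqrt 2 := by
    rw [eq_div_iff (ne_of_gt h2pos)]
    linarith [h23]
  calc l2norm h ≤ Real.sqrt 2 * (A + 2*(b/sq)) := hfinal
    _ ≤ Real.sqrt 2 * (E + 2*(b/sq)) :=
        mul_le_mul_of_nonneg_left (by linarith [hAE]) (Real.sqrt_nonneg 2)
    _ = 2 * Real.sqrt 3 / D * sq * lam + 2 * Real.sqrt 2 * (1 - δ) / D * (sq⁻¹ * b) := by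
        rw [hE, h24]
        have hδθ : 1 - δ = D + θ := by rw [hDdef]; ring
        rw [hδθ]
        field_simp
        ring
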